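/- Let y_1, …, y_m ∈ {0,1} ⊆ ℤ and let s ∈ {0,1} be the parity of Σ_{a=1}^m y_a (i.e., s ≡ Σ_a y_a (mod 2)). Then, as integers, s ≡ Σ_{a=1}^m y_a − 2·Σ_{1 ≤ a < b ≤ m} y_a y_b + 4·Σ_{1 ≤ a < b < c ≤ m} y_a y_b y_c (mod 8). -/

import Mathlib

private lemma pair_split (m : ℕ) (y : Fin (m+1) → ℤ) :
    (∑ a, ∑ b, if a < b then y a * y b else 0)
      = (∑ a : Fin m, ∑ b : Fin m, if a < b then y a.castSucc * y b.castSucc else 0)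
        + (∑ a : Fin m, y a.castSucc) * y (Fin.last m) := by
  rw [Fin.sum_univ_castSucc]
  simp [Fin.sum_univ_castSucc (n := m), Fin.castSucc_lt_castSucc_iff, Fin.castSucc_lt_last,
    Finset.sum_add_distrib, Finset.sum_mul,
    (fun i : Fin m => not_lt.2 (Fin.castSucc_lt_last i).le : ∀ i : Fin m, ¬ Fin.last m < i.castSucc)]

private lemma triple_split (m : ℕ) (y : Fin (m+1) → ℤ) :
    (∑ a, ∑ b, ∑ c, if a < b ∧ b < c then y a * y b * y c else 0)
      = (∑ a : Fin m, ∑ b : Fin m, ∑ c : Fin m,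
          if a < b ∧ b < c then y a.castSucc * y b.castSucc * y c.castSucc else 0)
        + (∑ a : Fin m, ∑ b : Fin m, if a < b then y a.castSucc * y b.castSucc else 0) * y (Fin.last m) := by
  rw [Fin.sum_univ_castSucc]
  simp [Fin.sum_univ_castSucc (n := m), Fin.castSucc_lt_castSucc_iff, Fin.castSucc_lt_last,
    Finset.sum_add_distrib, Finset.sum_mul,
    (fun i : Fin m => not_lt.2 (Fin.castSucc_lt_last i).le : ∀ i : Fin m, ¬ Fin.last m < i.castSucc)]

private lemma pair_id : ∀ (m : ℕ) (y : Fin m → ℤ), (∀ a, y a = 0 ∨ y a = 1) →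
    2 * (∑ a, ∑ b, if a < b then y a * y b else 0)
      = (∑ a, y a) ^ 2 - (∑ a, y a) := by
  intro m
  induction m with
  | zero => intro y hy; simp
  | succ m ih =>
    intro y hy
    have h := ih (fun i => y i.castSucc) (fun i => hy i.castSucc)
    rw [pair_split, Fin.sum_univ_castSucc (f := y)]
    rcases hy (Fin.last m) with h0 | h0 <;> rw [h0] <;> linear_combination h

private lemma triple_id : ∀ (m : ℕ) (y : Fin m → ℤ), (∀ a, y a = 0 ∨ y a = 1) →
    6 * (∑ a, ∑ b, ∑ c, if a < b ∧ b < c then y a * y b * y c else 0)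
      = (∑ a, y a) ^ 3 - 3 * (∑ a, y a) ^ 2 + 2 * (∑ a, y a) := by
  intro m
  induction m with
  | zero => intro y hy; simp
  | succ m ih =>
    intro y hy
    have h := ih (fun i => y i.castSucc) (fun i => hy i.castSucc)
    have hp := pair_id m (fun i => y i.castSucc) (fun i => hy i.castSucc)
    rw [triple_split, Fin.sum_univ_castSucc (f := y)]
    rcases hy (Fin.last m) with h0 | h0 <;> rw [h0]
    · linear_combination h
    · linear_combination h + 3 * hp

/-- Let `y 1, …, y m ∈ {0,1} ⊆ ℤ` and let `s ∈ {0,1}` be the parity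
of `∑ a, y a`.  Then, as integers,
`s ≡ ∑ a, y a - 2 ∑_{a<b} y a y b + 4 ∑_{a<b<c} y a y b y c (mod 8)`. -/
theorem stmt17 (m : ℕ) (y : Fin m → ℤ) (hy : ∀ a, y a = 0 ∨ y a = 1)
    (s : ℤ) (hs01 : s = 0 ∨ s = 1) (hs : s ≡ ∑ a, y a [ZMOD 2]) :
    s ≡ (∑ a, y a)
          - 2 * (∑ a, ∑ b, if a < b then y a * y b else 0)
          + 4 * (∑ a, ∑ b, ∑ c, if a < b ∧ b < c then y a * y b * y c else 0)
        [ZMOD 8] := by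
  set n : ℤ := ∑ a, y a with hn
  set P : ℤ := ∑ a, ∑ b, if a < b then y a * y b else 0 with hP
  set T : ℤ := ∑ a, ∑ b, ∑ c, if a < b ∧ b < c then y a * y b * y c else 0 with hT
  have h2P : 2 * P = n ^ 2 - n := pair_id m y hy
  have h6T : 6 * T = n ^ 3 - 3 * n ^ 2 + 2 * n := triple_id m y hy
  -- it suffices to prove the congruence multiplied by 3 (coprime to 8)
  suffices h3 : 3 * s ≡ 3 * (n - 2 * P + 4 * T) [ZMOD 8] by
    have := Int.ModEq.cancel_left_div_gcd (by norm_num : (0:ℤ) < 8) h3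
    simpa [show Int.gcd 8 3 = 1 by norm_num] using this
  have key : 3 * (n - 2 * P + 4 * T) = 2 * n ^ 3 - 9 * n ^ 2 + 10 * n := by
    linear_combination -3 * h2P + 2 * h6T
  rw [key]
  -- n = s + 2k for some k
  obtain ⟨k, hk⟩ : (2:ℤ) ∣ n - s := Int.ModEq.dvd hs
  have hnk : n = s + 2 * k := by linarith
  rw [Int.modEq_iff_dvd]
  rcases hs01 with rfl | rfl <;>
    rcases Int.even_or_odd k with ⟨j, hj⟩ | ⟨j, hj⟩ <;>
    rw [hnk, hj]
  · exact ⟨16 * j ^ 3 - 18 * j ^ 2 + 5 * j, by ring⟩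
  · exact ⟨16 * j ^ 3 + 6 * j ^ 2 - j, by ring⟩
  · exact ⟨16 * j ^ 3 - 6 * j ^ 2 - j, by ring⟩
  · exact ⟨16 * j ^ 3 + 18 * j ^ 2 + 5 * j, by ring⟩
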